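/- Let T be a finite tree, wt(T) its working tree, and S a subtree (connected subgraph) of T with vertex set {v_1,...,v_k}. Then there exists an index i* such that every v_j with j ≠ i* is a strict descendant of v_{i*} in wt(T). -/
import Mathlib

/- Descendants of `v` under the parent function `p` of a rooted (working) tree. -/
def desc {V : Type*} (p : V → V) (v : V) : Set V := {u | ∃ k, p^[k] u = v}

section Aux

attribute [local instance] Classical.propDecidable

variable {V : Type*} {p : V → V} {r : V}

lemma mem_desc_self (p : V → V) (v : V) : v ∈ desc p v := ⟨0, rfl⟩

lemma desc_sub_parent (p : V → V) (u : V) : desc p u ⊆ desc p (p u) := by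
  rintro x ⟨k, hk⟩
  exact ⟨k + 1, by rw [Function.iterate_succ_apply', hk]⟩

noncomputable def dpt (p : V → V) (r : V) (hreach : ∀ v, ∃ k, p^[k] v = r) (v : V) : ℕ :=
  Nat.find (hreach v)

lemma dpt_parent_lt (hreach : ∀ v, ∃ k, p^[k] v = r) {x : V} (hx : x ≠ r) :
    dpt p r hreach (p x) < dpt p r hreach x := by
  have h0 : dpt p r hreach x ≠ 0 := by
    intro h
    exact hx (by simpa using Nat.find_eq_zero (hreach x) |>.mp h)
  obtain ⟨m, hm⟩ := Nat.exists_eq_succ_of_ne_zero h0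
  have hfind : p^[m + 1] x = r := by
    have := Nat.find_spec (hreach x)
    rwa [show Nat.find (hreach x) = m + 1 from hm] at this
  have : p^[m] (p x) = r := by rwa [Function.iterate_succ_apply] at hfind
  have : dpt p r hreach (p x) ≤ m := Nat.find_le this
  omega

lemma dpt_desc (hroot : p r = r) (hreach : ∀ v, ∃ k, p^[k] v = r) :
    ∀ (m : ℕ) (x y : V), p^[m] x = y → x = y ∨ dpt p r hreach y < dpt p r hreach x := by
  intro m
  induction m with
  | zero => intro x y h; exact Or.inl h
  | succ m ih =>
    intro x y h
    by_cases hx : x = r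
    · left
      subst hx
      rw [Function.iterate_fixed hroot] at h
      exact h
    · right
      rw [Function.iterate_succ_apply] at h
      rcases ih (p x) y h with h1 | h1
      · rw [← h1]; exact dpt_parent_lt hreach hx
      · exact h1.trans (dpt_parent_lt hreach hx)

lemma mem_desc_of_desc_mem {u y : V} (h : p u ∈ desc p y) : u ∈ desc p y := by
  obtain ⟨m, hm⟩ := h
  exact ⟨m + 1, by rwa [Function.iterate_succ_apply]⟩

/-- Any `T`-edge from inside `desc p w` to outside goes to a strict ancestor of `w`. -/
lemma edge_anc (T : SimpleGraph V) (hroot : p r = r) (hreach : ∀ v, ∃ k, p^[k] v = r)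
    (hcomp : ∀ u, u ≠ r → ∃ K : (T.induce (desc p (p u) \ {p u})).ConnectedComponent,
        desc p u = Subtype.val '' K.supp) :
    ∀ (n : ℕ) (w x y : V), dpt p r hreach w ≤ n → x ∈ desc p w → T.Adj x y →
      y ∉ desc p w → w ∈ desc p y := by
  intro n
  induction n with
  | zero =>
    intro w x y hn hx hxy hy
    have hw : w = r := by
      by_contra hw
      have h0 : dpt p r hreach w ≠ 0 := by
        intro h
        exact hw (by simpa using Nat.find_eq_zero (hreach w) |>.mp h)
      omega
    subst hw
    exact absurd (hreach y) hy
  | succ n ih =>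
    intro w x y hn hx hxy hy
    by_cases hw : w = r
    · subst hw; exact absurd (hreach y) hy
    · by_cases hy1 : y = p w
      · exact ⟨1, by simp [hy1]⟩
      · have hpw_ne : p w ∉ desc p w := by
          intro hmem
          rcases dpt_desc hroot hreach hmem.choose (p w) w hmem.choose_spec with h1 | h1
          · -- p w = w : then w is a fixed point, so w = r
            have : ∀ k, p^[k] w = w := fun k => Function.iterate_fixed h1 k
            obtain ⟨k, hk⟩ := hreach w
            exact hw ((this k).symm.trans hk)
          · exact absurd h1 (Nat.not_lt.mpr (Nat.le_of_lt (dpt_parent_lt hreach hw)))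
        by_cases hy2 : y ∈ desc p (p w)
        · -- both x and y in the slice; use the component hypothesis
          exfalso
          obtain ⟨K, hK⟩ := hcomp w hw
          have hxA : x ∈ desc p (p w) \ {p w} := by
            refine ⟨desc_sub_parent p w hx, ?_⟩
            intro hxe
            simp only [Set.mem_singleton_iff] at hxe
            exact hpw_ne (hxe ▸ hx)
          have hyA : y ∈ desc p (p w) \ {p w} :=
            ⟨hy2, by simpa using hy1⟩
          have hxK : (⟨x, hxA⟩ : (desc p (p w) \ {p w} : Set V)) ∈ K.supp := by
            have : x ∈ Subtype.val '' K.supp := hK ▸ hx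
            obtain ⟨x', hx', hval⟩ := this
            have : x' = ⟨x, hxA⟩ := Subtype.ext hval
            exact this ▸ hx'
          have hadj : (T.induce (desc p (p w) \ {p w})).Adj ⟨x, hxA⟩ ⟨y, hyA⟩ := by
            simpa using hxy
          have hyK : (⟨y, hyA⟩ : (desc p (p w) \ {p w} : Set V)) ∈ K.supp := by
            rw [SimpleGraph.ConnectedComponent.mem_supp_iff] at hxK ⊢
            rw [← hxK]
            exact SimpleGraph.ConnectedComponent.sound hadj.symm.reachable
          have : y ∈ desc p w := hK ▸ ⟨⟨y, hyA⟩, hyK, rfl⟩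
          exact hy this
        · -- y outside the parent's descendants: recurse at p w
          have hn' : dpt p r hreach (p w) ≤ n := by
            have := dpt_parent_lt hreach hw
            omega
          have := ih (p w) x y hn' (desc_sub_parent p w hx) hxy hy2
          exact mem_desc_of_desc_mem this

end Aux

theorem stmt5 {V : Type*} [Fintype V] (T : SimpleGraph V) (hT : T.IsTree)
    (p : V → V) (r : V)
    (hroot : p r = r)
    (hreach : ∀ v, ∃ k, p^[k] v = r)
    (hcomp : ∀ u, u ≠ r → ∃ K : (T.induce (desc p (p u) \ {p u})).ConnectedComponent,
        desc p u = Subtype.val '' K.supp)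
    (hhalf : ∀ u, u ≠ r → 2 * Nat.card (desc p u) ≤ Nat.card (desc p (p u)))
    (S : Set V) (hS : S.Nonempty) (hconn : (T.induce S).Connected) :
    ∃ v ∈ S, ∀ u ∈ S, u ≠ v → u ∈ desc p v := by
  classical
  obtain ⟨v, hvS, hvmin⟩ := Set.exists_min_image S (dpt p r hreach) S.toFinite hS
  refine ⟨v, hvS, ?_⟩
  intro u huS _
  by_contra hu
  -- walk from u to v inside S
  have hreach' : (T.induce S).Reachable ⟨u, huS⟩ ⟨v, hvS⟩ := hconn.preconnected _ _
  obtain ⟨wlk⟩ := hreach'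
  -- induction along the walk
  have key : ∀ (x e : S), (T.induce S).Walk x e → (e : V) = v → (x : V) ∉ desc p v → False := by
    intro x e wlk
    induction wlk with
    | nil => intro he h; exact h (he ▸ mem_desc_self p (_ : V))
    | @cons a b c hadj wlk' ih =>
      intro he hx
      by_cases hb : (b : V) ∈ desc p v
      · have hTadj : T.Adj (b : V) (a : V) := by simpa using hadj.symm
        have hva : v ∈ desc p (a : V) :=
          edge_anc T hroot hreach hcomp (dpt p r hreach v) v (b : V) (a : V)
            le_rfl hb hTadj hx
        obtain ⟨m, hm⟩ := hva
        rcases dpt_desc hroot hreach m v (a : V) hm with h1 | h1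
        · exact hx (h1 ▸ mem_desc_self p v)
        · exact absurd h1 (Nat.not_lt.mpr (hvmin _ a.2))
      · exact ih he hb
  exact key ⟨u, huS⟩ ⟨v, hvS⟩ wlk rfl hu
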